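/- For λ ∈ ℂ and integer z ≥ 0, define ψ_λ(z) = Σ_{y=0}^{z} q^{λ(2y-z)} / ((q)_y (q)_{z-y}), where (q)_n = (1-q)(1-q²)···(1-qⁿ) is the q-Pochhammer symbol and (q)_0 = 1. Then ψ_λ satisfies the difference equation (1 - q^{z+1}) ψ_λ(z+1) + ψ_λ(z-1) = (q^λ + q^{-λ}) ψ_λ(z) for all z ≥ 0, with the convention ψ_λ(-1) = 0. -/

import Mathlib

open Finset

/-- The q-Pochhammer symbol `(q)ₙ = ∏_{k=1}^n (1 - q^k)`, viewed in `ℂ`. -/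
noncomputable def qPoch (q : ℝ) (n : ℕ) : ℂ :=
  ∏ k ∈ Finset.range n, (1 - (q : ℂ) ^ (k + 1))

/-- `q^w` for complex `w`, defined via the complex exponential. -/
noncomputable def qcpow (q : ℝ) (w : ℂ) : ℂ :=
  Complex.exp (w * Real.log q)

/-- The q-deformed Whittaker function `ψ_λ(z)`, extended by `0` to negative integers. -/
noncomputable def qWhittaker (q : ℝ) (lam : ℂ) : ℤ → ℂ := fun z =>
  if z < 0 then 0
  else ∑ y ∈ Finset.range (z.toNat + 1),
    qcpow q (lam * (2 * (y : ℂ) - (z.toNat : ℂ))) / (qPoch q y * qPoch q (z.toNat - y))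

lemma qcpow_add (q : ℝ) (a b : ℂ) : qcpow q (a + b) = qcpow q a * qcpow q b := by
  simp [qcpow, add_mul, Complex.exp_add]

lemma qPoch_succ (q : ℝ) (n : ℕ) : qPoch q (n + 1) = qPoch q n * (1 - (q:ℂ) ^ (n + 1)) :=
  Finset.prod_range_succ _ n

lemma qPoch_zero (q : ℝ) : qPoch q 0 = 1 := rfl

lemma one_sub_qpow_ne (q : ℝ) (hq0 : 0 < q) (hq1 : q < 1) (k : ℕ) :
    (1 - (q:ℂ) ^ (k + 1)) ≠ 0 := by
  have h : (q:ℝ) ^ (k+1) < 1 := pow_lt_one₀ hq0.le hq1 (Nat.succ_ne_zero k)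
  intro hc
  have h2 : ((q:ℂ)) ^ (k+1) = 1 := by linear_combination -hc
  have h3 : ((q ^ (k+1) : ℝ) : ℂ) = ((1:ℝ):ℂ) := by push_cast; exact h2
  have := Complex.ofReal_injective h3
  linarith

lemma qPoch_ne_zero (q : ℝ) (hq0 : 0 < q) (hq1 : q < 1) (n : ℕ) : qPoch q n ≠ 0 := by
  unfold qPoch
  exact Finset.prod_ne_zero_iff.2 fun k _ => one_sub_qpow_ne q hq0 hq1 k

lemma cancel_aux (X P w : ℂ) (hP : P ≠ 0) (hw : w ≠ 0) :
    w * (X / (P * w)) = X / P := by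
  field_simp

lemma div_identity (X Py Pd u v w : ℂ) (hPy : Py ≠ 0) (hPd : Pd ≠ 0) (hu : u ≠ 0) (hv : v ≠ 0)
    (hs : w + u * v = u + v) :
    w * (X / ((Py * u) * (Pd * v))) + X / (Py * Pd)
      = X / (Py * (Pd * v)) + X / ((Py * u) * Pd) := by
  field_simp
  linear_combination X * hs

/-- The difference equation
`(1 - q^{z+1}) ψ_λ(z+1) + ψ_λ(z-1) = (q^λ + q^{-λ}) ψ_λ(z)`, with `ψ_λ(-1) = 0`. -/
theorem qWhittaker_difference_equation (q : ℝ) (hq0 : 0 < q) (hq1 : q < 1)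
    (lam : ℂ) (z : ℕ) :
    (1 - (q : ℂ) ^ (z + 1)) * qWhittaker q lam ((z : ℤ) + 1)
        + qWhittaker q lam ((z : ℤ) - 1)
      = (qcpow q lam + qcpow q (-lam)) * qWhittaker q lam (z : ℤ) := by
  classical
  have hP := qPoch_ne_zero q hq0 hq1
  have h1 := one_sub_qpow_ne q hq0 hq1
  set F : ℕ → ℂ := fun y => qcpow q (lam * (2 * (y:ℂ) - ((z:ℂ) + 1))) with hF
  set f : ℕ → ℂ := fun y => F y / (qPoch q (y - 1) * qPoch q (z - y)) with hf
  set g : ℕ → ℂ := fun y => F y / (qPoch q (y - 1) * qPoch q (z + 1 - y)) with hg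
  set c : ℕ → ℂ := fun y => F y / (qPoch q y * qPoch q (z - y)) with hc
  set A : ℕ → ℂ := fun y => (1 - (q:ℂ) ^ (z + 1)) * (F y / (qPoch q y * qPoch q (z + 1 - y)))
    with hA
  have e1 : (1 - (q : ℂ) ^ (z + 1)) * qWhittaker q lam ((z:ℤ) + 1)
      = ∑ y ∈ range (z + 2), A y := by
    have ht : ((z:ℤ) + 1).toNat = z + 1 := by omega
    rw [qWhittaker, if_neg (by omega), ht, Finset.mul_sum]
    refine Finset.sum_congr rfl fun y _ => ?_
    simp only [hA, hF]
    push_cast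
    ring_nf
  have e0 : qWhittaker q lam ((z:ℤ)) = ∑ y ∈ range (z + 1),
      qcpow q (lam * (2 * (y:ℂ) - (z:ℂ))) / (qPoch q y * qPoch q (z - y)) := by
    rw [qWhittaker, if_neg (by omega)]
    simp
  have em : qWhittaker q lam ((z:ℤ) - 1) = ∑ y ∈ range z, f (y + 1) := by
    cases z with
    | zero => simp [qWhittaker]
    | succ n =>
      have ht : (((n:ℤ) + 1) - 1).toNat = n := by omega
      rw [qWhittaker, if_neg (by push_cast; omega)]
      rw [show ((n + 1 : ℕ):ℤ) - 1 = ((n:ℤ) + 1) - 1 by push_cast; ring, ht]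
      refine Finset.sum_congr rfl fun y hy => ?_
      simp only [hf, hF]
      have h2 : n + 1 - (y + 1) = n - y := by omega
      have h3 : y + 1 - 1 = y := by omega
      rw [h2, h3]
      congr 2
      push_cast
      ring
  have eR : (qcpow q lam + qcpow q (-lam)) * qWhittaker q lam ((z:ℤ))
      = ∑ y ∈ range (z + 1), (g (y + 1) + c y) := by
    rw [e0, Finset.mul_sum]
    refine Finset.sum_congr rfl fun y _ => ?_
    have hzy : z + 1 - (y + 1) = z - y := by omega
    have h3 : y + 1 - 1 = y := by omega
    simp only [hg, hc, hzy, h3]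
    have hq1' : qcpow q lam * qcpow q (lam * (2 * (y:ℂ) - (z:ℂ))) = F (y+1) := by
      rw [← qcpow_add]; simp only [hF]; congr 1; push_cast; ring
    have hq2' : qcpow q (-lam) * qcpow q (lam * (2 * (y:ℂ) - (z:ℂ))) = F y := by
      rw [← qcpow_add]; simp only [hF]; congr 1; ring
    rw [← hq1', ← hq2']
    ring
  rw [e1, em, eR]
  have key : ∀ y ∈ range z, A (y + 1) + f (y + 1) = g (y + 1) + c (y + 1) := by
    intro y hy
    rw [Finset.mem_range] at hy
    obtain ⟨d, hd⟩ : ∃ d, z = y + 1 + d := ⟨z - (y + 1), by omega⟩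
    subst hd
    have h2 : y + 1 + d - (y + 1) = d := by omega
    have h3 : y + 1 + d + 1 - (y + 1) = d + 1 := by omega
    have h4 : y + 1 + d - y = d + 1 := by omega
    have h5 : y + 1 + d + 1 - y = d + 2 := by omega
    have h6 : y + 1 - 1 = y := by omega
    simp only [hA, hf, hg, hc, h2, h3, h4, h5, h6]
    rw [qPoch_succ q d, qPoch_succ q y]
    have hpow : (q:ℂ) ^ (y+1) * (q:ℂ) ^ (d+1) = (q:ℂ) ^ (y+1+d+1) := by
      ring
    have hs : (1 - (q:ℂ) ^ (y+1+d+1)) + (1 - (q:ℂ)^(y+1)) * (1 - (q:ℂ)^(d+1))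
        = (1 - (q:ℂ)^(y+1)) + (1 - (q:ℂ)^(d+1)) := by
      linear_combination hpow
    exact div_identity (F (y+1)) (qPoch q y) (qPoch q d) _ _ _
      (hP y) (hP d) (h1 y) (h1 d) hs
  have hA0 : A 0 = c 0 := by
    simp only [hA, hc, Nat.sub_zero, qPoch_zero, one_mul, qPoch_succ]
    exact cancel_aux (F 0) (qPoch q z) _ (hP z) (h1 z)
  have hAz : A (z + 1) = g (z + 1) := by
    simp only [hA, hg, Nat.sub_self, Nat.add_sub_cancel, qPoch_zero, mul_one, qPoch_succ]
    exact cancel_aux (F (z + 1)) (qPoch q z) _ (hP z) (h1 z)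
  have hL : ∑ y ∈ range (z + 2), A y = ∑ y ∈ range z, A (y + 1) + A 0 + A (z + 1) := by
    rw [Finset.sum_range_succ, Finset.sum_range_succ']
  have hR1 : ∑ y ∈ range (z + 1), (g (y + 1) + c y)
      = (∑ y ∈ range z, g (y + 1) + g (z + 1)) + (∑ y ∈ range z, c (y + 1) + c 0) := by
    rw [Finset.sum_add_distrib, Finset.sum_range_succ (fun y => g (y + 1)),
      Finset.sum_range_succ' c]
  have hsum : ∑ y ∈ range z, A (y + 1) + ∑ y ∈ range z, f (y + 1)
      = ∑ y ∈ range z, g (y + 1) + ∑ y ∈ range z, c (y + 1) := by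
    rw [← Finset.sum_add_distrib, ← Finset.sum_add_distrib]
    exact Finset.sum_congr rfl key
  rw [hL, hR1]
  linear_combination hsum + hA0 + hAz
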